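/- For any tuple θ₁,...,θ_V ∈ ℝ^d with average μ and covariance matrix Σ, any geometric median g satisfies ‖μ - g‖₂ ≤ √(tr Σ), where Σ_{ij} = (1/V) Σ_v (θ_v[i] - μ[i])(θ_v[j] - μ[j]). -/

import Mathlib

/-- Any geometric median `g` of `θ 1, ..., θ V` is within `√(tr Σ)` of the average `μ`,
where `tr Σ = (1/V) ∑ v ‖θ v - μ‖₂²` is the trace of the covariance matrix. -/
theorem geometric_median_close_to_average (d V : ℕ) (hV : 0 < V)
    (θ : Fin V → EuclideanSpace ℝ (Fin d)) (μ g : EuclideanSpace ℝ (Fin d))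
    (hμ : μ = (V : ℝ)⁻¹ • ∑ v, θ v)
    (hg : ∀ z, ∑ v, ‖g - θ v‖ ≤ ∑ v, ‖z - θ v‖) :
    ‖μ - g‖ ≤ Real.sqrt ((V : ℝ)⁻¹ * ∑ v, ‖θ v - μ‖ ^ 2) := by
  have hV0 : (0:ℝ) < (V:ℝ) := by exact_mod_cast hV
  have h1 : ‖μ - g‖ ≤ (V:ℝ)⁻¹ * ∑ v, ‖g - θ v‖ := by
    have : μ - g = (V:ℝ)⁻¹ • ∑ v, (θ v - g) := by
      rw [hμ, Finset.sum_sub_distrib, smul_sub, Finset.sum_const, Finset.card_univ,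
        Fintype.card_fin]
      simp [← Nat.cast_smul_eq_nsmul ℝ, smul_smul, inv_mul_cancel₀ hV0.ne']
    rw [this, norm_smul]
    simp only [norm_inv, Real.norm_natCast]
    gcongr
    calc ‖∑ v, (θ v - g)‖ ≤ ∑ v, ‖θ v - g‖ := norm_sum_le _ _
      _ = ∑ v, ‖g - θ v‖ := by simp [norm_sub_rev]
  have h2 : ∑ v, ‖g - θ v‖ ≤ ∑ v, ‖θ v - μ‖ := by
    refine (hg μ).trans_eq ?_
    simp [norm_sub_rev]
  have h3 : ((V:ℝ)⁻¹ * ∑ v, ‖θ v - μ‖) ^ 2 ≤ (V:ℝ)⁻¹ * ∑ v, ‖θ v - μ‖ ^ 2 := by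
    have := sq_sum_le_card_mul_sum_sq (s := Finset.univ) (f := fun v => ‖θ v - μ‖)
    simp only [Finset.card_univ, Fintype.card_fin] at this
    rw [mul_pow]
    calc ((V:ℝ)⁻¹)^2 * (∑ v, ‖θ v - μ‖)^2 ≤ ((V:ℝ)⁻¹)^2 * ((V:ℝ) * ∑ v, ‖θ v - μ‖ ^ 2) := by
          have h' : (∑ v, ‖θ v - μ‖)^2 ≤ (V:ℝ) * ∑ v, ‖θ v - μ‖ ^ 2 := by
            exact_mod_cast this
          gcongr
      _ = (V:ℝ)⁻¹ * ((V:ℝ)⁻¹ * (V:ℝ)) * ∑ v, ‖θ v - μ‖ ^ 2 := by ring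
      _ = (V:ℝ)⁻¹ * ∑ v, ‖θ v - μ‖ ^ 2 := by rw [inv_mul_cancel₀ hV0.ne']; ring
  calc ‖μ - g‖ ≤ (V:ℝ)⁻¹ * ∑ v, ‖θ v - μ‖ := h1.trans (by gcongr)
    _ = Real.sqrt (((V:ℝ)⁻¹ * ∑ v, ‖θ v - μ‖)^2) := by
        rw [Real.sqrt_sq (by positivity)]
    _ ≤ Real.sqrt ((V:ℝ)⁻¹ * ∑ v, ‖θ v - μ‖ ^ 2) := Real.sqrt_le_sqrt h3
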